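/- For real μ with 1/2 < μ < 1, the integral of sin(x)^(2μ - 2) / cos(2x)^μ over x from 0 to π/4 equals Γ(μ - 1/2) * Γ(1 - μ) / (2√π). -/

import Mathlib

open Real MeasureTheory Set

lemma real_beta {a b : ℝ} (ha : 0 < a) (hb : 0 < b) :
    ∫ x in (0:ℝ)..1, x ^ (a-1) * (1-x) ^ (b-1) =
      Real.Gamma a * Real.Gamma b / Real.Gamma (a+b) := by
  have hab : Complex.Gamma a * Complex.Gamma b =
      Complex.Gamma (a+b) * Complex.betaIntegral a b :=
    Complex.Gamma_mul_Gamma_eq_betaIntegral (by simpa using ha) (by simpa using hb)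
  have hre : Complex.betaIntegral a b =
      ((∫ x in (0:ℝ)..1, x ^ (a-1) * (1-x) ^ (b-1) : ℝ) : ℂ) := by
    rw [Complex.betaIntegral, ← intervalIntegral.integral_ofReal]
    refine intervalIntegral.integral_congr fun x hx => ?_
    rw [Set.uIcc_of_le (by norm_num : (0:ℝ) ≤ 1)] at hx
    rw [Complex.ofReal_mul, Complex.ofReal_cpow hx.1,
      Complex.ofReal_cpow (by linarith [hx.2] : (0:ℝ) ≤ 1 - x)]
    push_cast
    ring
  rw [hre, ← Complex.ofReal_add, Complex.Gamma_ofReal, Complex.Gamma_ofReal,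
    Complex.Gamma_ofReal, ← Complex.ofReal_mul, ← Complex.ofReal_mul] at hab
  have hG : Real.Gamma (a+b) ≠ 0 := (Real.Gamma_pos_of_pos (by linarith)).ne'
  have h2 : Real.Gamma a * Real.Gamma b =
      Real.Gamma (a+b) * ∫ x in (0:ℝ)..1, x ^ (a-1) * (1-x) ^ (b-1) :=
    Complex.ofReal_inj.mp hab
  field_simp [hG] at h2 ⊢
  linarith [h2]

lemma key16 (μ : ℝ) {x : ℝ} (hx : x ∈ Ioo 0 (π/4)) :
    |2 * Real.tan x * (1 / Real.cos x ^ 2)| •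
      ((1:ℝ)/2 * (Real.tan x ^ 2) ^ (μ - 3/2) * (1 - Real.tan x ^ 2) ^ (-μ))
      = Real.sin x ^ (2*μ - 2) * Real.cos (2*x) ^ (-μ) := by
  obtain ⟨h0, h4⟩ := hx
  have hπ : (0:ℝ) < π := Real.pi_pos
  have hc : 0 < Real.cos x := Real.cos_pos_of_mem_Ioo ⟨by linarith, by linarith⟩
  have hs : 0 < Real.sin x := Real.sin_pos_of_pos_of_lt_pi h0 (by linarith)
  have hc2 : 0 < Real.cos (2*x) := Real.cos_pos_of_mem_Ioo ⟨by linarith, by linarith⟩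
  have ht : 0 < Real.tan x := Real.tan_pos_of_pos_of_lt_pi_div_two h0 (by linarith)
  have e1 : (Real.tan x ^ 2) ^ (μ - 3/2) = Real.tan x ^ (2*μ - 3) := by
    rw [← Real.rpow_natCast (Real.tan x) 2, ← Real.rpow_mul ht.le]
    norm_num
    ring_nf
  have e2 : Real.tan x ^ (2*μ-3) * Real.tan x = Real.tan x ^ (2*μ-2) := by
    nth_rewrite 2 [← Real.rpow_one (Real.tan x)]
    rw [← Real.rpow_add ht]; ring_nf
  have e3 : Real.tan x ^ (2*μ-2) = Real.sin x ^ (2*μ-2) / Real.cos x ^ (2*μ-2) := by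
    rw [Real.tan_eq_sin_div_cos, Real.div_rpow hs.le hc.le]
  have e4 : (1 - Real.tan x^2) = Real.cos (2*x) / Real.cos x ^ 2 := by
    have hpy := Real.sin_sq_add_cos_sq x
    rw [Real.tan_eq_sin_div_cos, Real.cos_two_mul]
    field_simp
    nlinarith
  have e5 : (1 - Real.tan x ^2) ^ (-μ) =
      Real.cos (2*x) ^ (-μ) * (Real.cos x ^ 2) ^ μ := by
    rw [e4, Real.div_rpow hc2.le (by positivity), Real.rpow_neg (by positivity : (0:ℝ) ≤ Real.cos x ^2),
      division_def, inv_inv]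
  have e6 : (Real.cos x ^ 2 : ℝ) ^ μ = Real.cos x ^ (2*μ-2) * Real.cos x ^ 2 := by
    rw [← Real.rpow_natCast (Real.cos x) 2, ← Real.rpow_mul hc.le, ← Real.rpow_add hc]
    congr 1
    push_cast
    ring
  rw [smul_eq_mul, abs_of_pos (by positivity), e1, e5, e6]
  have e23 : Real.tan x ^ (2*μ-3) * Real.tan x * Real.cos x ^ (2*μ-2) = Real.sin x ^ (2*μ-2) := by
    rw [e2, e3]
    field_simp
  field_simp
  have e23' : Real.tan x * Real.tan x ^ (2*μ-3) * Real.cos x ^ (2*(μ-1)) = Real.sin x ^ (2*(μ-1)) := by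
    rw [show 2*(μ-1) = 2*μ-2 by ring]; linear_combination e23
  linear_combination e23'

lemma img16 : (fun x => Real.tan x ^ 2) '' Ioo 0 (π/4) = Ioo 0 1 := by
  have hπ : (0:ℝ) < π := Real.pi_pos
  ext u
  constructor
  · rintro ⟨x, ⟨h0, h4⟩, rfl⟩
    have ht : 0 < Real.tan x := Real.tan_pos_of_pos_of_lt_pi_div_two h0 (by linarith)
    have ht1 : Real.tan x < 1 := by
      calc Real.tan x < Real.tan (π/4) :=
        Real.tan_lt_tan_of_lt_of_lt_pi_div_two (by linarith) (by linarith) h4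
      _ = 1 := Real.tan_pi_div_four
    exact ⟨by positivity, pow_lt_one₀ ht.le ht1 two_ne_zero⟩
  · rintro ⟨hu0, hu1⟩
    refine ⟨Real.arctan (Real.sqrt u), ⟨by simpa using Real.arctan_strictMono (by positivity : (0:ℝ) < Real.sqrt u), ?_⟩, ?_⟩
    · calc Real.arctan (Real.sqrt u) < Real.arctan 1 := by
            apply Real.arctan_strictMono
            nlinarith [Real.sq_sqrt hu0.le, Real.sqrt_nonneg u]
        _ = π/4 := Real.arctan_one
    · simp [Real.tan_arctan, Real.sq_sqrt hu0.le]

lemma inj16 : InjOn (fun x => Real.tan x ^ 2) (Ioo 0 (π/4)) := by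
  have hπ : (0:ℝ) < π := Real.pi_pos
  intro a ha b hb hab
  have h1 : 0 ≤ Real.tan a := (Real.tan_pos_of_pos_of_lt_pi_div_two ha.1 (by linarith [ha.2])).le
  have h2 : 0 ≤ Real.tan b := (Real.tan_pos_of_pos_of_lt_pi_div_two hb.1 (by linarith [hb.2])).le
  have : Real.tan a = Real.tan b := by
    simp only at hab
    nlinarith
  exact Real.injOn_tan ⟨by linarith [ha.1], by linarith [ha.2]⟩
    ⟨by linarith [hb.1], by linarith [hb.2]⟩ this

theorem stmt16 (μ : ℝ) (h1 : 1/2 < μ) (h2 : μ < 1) :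
    ∫ x in (0:ℝ)..(π/4), (Real.sin x) ^ (2 * μ - 2) * (Real.cos (2 * x)) ^ (-μ) =
      Real.Gamma (μ - 1/2) * Real.Gamma (1 - μ) / (2 * Real.sqrt π) := by
  have hπ : (0:ℝ) < π := Real.pi_pos
  have h0le : (0:ℝ) ≤ π/4 := by linarith
  set g : ℝ → ℝ := fun u => (1:ℝ)/2 * u ^ (μ - 3/2) * (1-u) ^ (-μ) with hg
  have hderiv : ∀ x ∈ Ioo (0:ℝ) (π/4), HasDerivWithinAt (fun x => Real.tan x ^ 2)
      (2 * Real.tan x * (1 / Real.cos x ^ 2)) (Ioo (0:ℝ) (π/4)) x := by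
    intro x hx
    have hc : Real.cos x ≠ 0 :=
      (Real.cos_pos_of_mem_Ioo ⟨by linarith [hx.1], by linarith [hx.2]⟩).ne'
    have := ((Real.hasDerivAt_tan hc).pow 2).hasDerivWithinAt
      (s := Ioo (0:ℝ) (π/4))
    convert this using 1
    · ext y; simp
    · rfl
    · ext y; simp
    · norm_num
  have hsub := integral_image_eq_integral_abs_deriv_smul measurableSet_Ioo hderiv inj16 g
  rw [img16] at hsub
  have hcongr : ∫ x in Ioo (0:ℝ) (π/4),
      |2 * Real.tan x * (1 / Real.cos x ^ 2)| • g (Real.tan x ^ 2)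
      = ∫ x in Ioo (0:ℝ) (π/4), Real.sin x ^ (2*μ-2) * Real.cos (2*x) ^ (-μ) :=
    setIntegral_congr_fun measurableSet_Ioo fun x hx => key16 μ hx
  have hB := real_beta (a := μ - 1/2) (b := 1 - μ) (by linarith) (by linarith)
  have ea : μ - 1/2 - 1 = μ - 3/2 := by ring
  have eb : 1 - μ - 1 = -μ := by ring
  have eab : μ - 1/2 + (1 - μ) = 1/2 := by ring
  rw [ea, eb, eab, Real.Gamma_one_half_eq] at hB
  have hIoo : ∫ u in Ioo (0:ℝ) 1, g u
      = (1:ℝ)/2 * ∫ u in (0:ℝ)..1, u ^ (μ - 3/2) * (1-u) ^ (-μ) := by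
    rw [intervalIntegral.integral_of_le (by norm_num : (0:ℝ) ≤ 1),
      MeasureTheory.integral_Ioc_eq_integral_Ioo, ← MeasureTheory.integral_const_mul]
    refine setIntegral_congr_fun measurableSet_Ioo fun u hu => by ring
  rw [intervalIntegral.integral_of_le h0le, MeasureTheory.integral_Ioc_eq_integral_Ioo,
    ← hcongr, ← hsub, hIoo, hB]
  ring
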